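/- Let d ≥ 2 and let I : ℝ^d → [0,∞) be Borel measurable and radial, I(ξ) = g(|ξ|) for some g : [0,∞) → [0,∞) which is concave on [0,ε) for some ε > 0. Define δ := sup{α ≥ 0 : lim_{ξ→0} I(ξ)/|ξ|^α = 0} (with sup ∅ := 0). If δ < d, then ∫_{{|ξ|<r}} dξ / I(ξ) < ∞ for all sufficiently small r > 0. -/

import Mathlib

open MeasureTheory Filter Topology
open scoped ENNReal

lemma aux_pow_rpow {q : ℝ} (hq : 0 ≤ q) (α : ℝ) (n : ℕ) :
    ((q : ℝ) ^ n) ^ α = (q ^ α) ^ n := by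
  rw [← Real.rpow_natCast q n, ← Real.rpow_natCast (q ^ α) n, ← Real.rpow_mul hq,
    ← Real.rpow_mul hq, mul_comm]

lemma aux_fin_int (d : ℕ) (hd : 0 < d) (α : ℝ) (hα0 : 0 ≤ α) (hαd : α < d)
    (r : ℝ) (hr : 0 < r) :
    ∫⁻ ξ in Metric.ball (0 : EuclideanSpace ℝ (Fin d)) r,
      (ENNReal.ofReal (‖ξ‖ ^ α))⁻¹ < ∞ := by
  have : Nontrivial (EuclideanSpace ℝ (Fin d)) := by
    refine ⟨EuclideanSpace.single ⟨0, hd⟩ 1, 0, fun h => ?_⟩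
    have h1 : ‖EuclideanSpace.single (⟨0, hd⟩ : Fin d) (1:ℝ)‖ = 1 := by
      rw [EuclideanSpace.norm_single]; norm_num
    rw [h] at h1; simp at h1
  set q : ℝ := (2 : ℝ)⁻¹ with hqdef
  have hq0 : (0:ℝ) < q := by norm_num
  have hq1 : q < 1 := by norm_num
  set ρ : ℕ → ℝ := fun n => r * q ^ n with hρ
  have hρ0 : ∀ n, 0 < ρ n := fun n => mul_pos hr (pow_pos hq0 n)
  set f : EuclideanSpace ℝ (Fin d) → ℝ≥0∞ := fun ξ => (ENNReal.ofReal (‖ξ‖ ^ α))⁻¹ with hf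
  set A : ℕ → Set (EuclideanSpace ℝ (Fin d)) :=
    fun n => Metric.ball 0 (ρ n) \ Metric.ball 0 (ρ (n + 1)) with hA
  have hcover : Metric.ball (0 : EuclideanSpace ℝ (Fin d)) r ⊆ {0} ∪ ⋃ n, A n := by
    intro ξ hξ
    rcases eq_or_ne ξ 0 with rfl | hne
    · exact Or.inl rfl
    right
    have hξ0 : 0 < ‖ξ‖ := norm_pos_iff.2 hne
    have hξr : ‖ξ‖ < r := by simpa using mem_ball_zero_iff.1 hξ
    have hex : ∃ n, ρ n ≤ ‖ξ‖ := by
      have := tendsto_pow_atTop_nhds_zero_of_lt_one hq0.le hq1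
      have h2 : Tendsto ρ atTop (𝓝 0) := by
        simpa [hρ, mul_zero] using (this.const_mul r)
      rcases ((h2.eventually (eventually_lt_nhds hξ0)).exists) with ⟨n, hn⟩
      exact ⟨n, hn.le⟩
    classical
    have h0 : ¬ ρ 0 ≤ ‖ξ‖ := by
      simp only [ρ, pow_zero, mul_one]; exact not_le.2 hξr
    have hs : ρ (Nat.find hex) ≤ ‖ξ‖ := Nat.find_spec hex
    have hpos : 0 < Nat.find hex :=
      Nat.pos_of_ne_zero (fun h => h0 (h ▸ hs))
    have hsucc : Nat.find hex - 1 + 1 = Nat.find hex := Nat.succ_pred_eq_of_pos hpos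
    refine Set.mem_iUnion.2 ⟨Nat.find hex - 1, ?_, ?_⟩
    · have hmin := Nat.find_min hex (m := Nat.find hex - 1) (Nat.sub_lt hpos one_pos)
      exact mem_ball_zero_iff.2 (lt_of_not_ge hmin)
    · have : ρ (Nat.find hex - 1 + 1) ≤ ‖ξ‖ := le_trans (le_of_eq (by rw [hsucc])) hs
      exact fun hmem => absurd (mem_ball_zero_iff.1 hmem) (not_lt.2 this)
  have key : ∫⁻ ξ in Metric.ball (0 : EuclideanSpace ℝ (Fin d)) r, f ξ ≤
      (∫⁻ ξ in {(0 : EuclideanSpace ℝ (Fin d))}, f ξ) + ∑' n, ∫⁻ ξ in A n, f ξ := by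
    calc ∫⁻ ξ in Metric.ball (0 : EuclideanSpace ℝ (Fin d)) r, f ξ
        ≤ ∫⁻ ξ in ({0} ∪ ⋃ n, A n), f ξ := lintegral_mono_set hcover
      _ ≤ (∫⁻ ξ in {(0 : EuclideanSpace ℝ (Fin d))}, f ξ) + ∫⁻ ξ in ⋃ n, A n, f ξ :=
          lintegral_union_le _ _ _
      _ ≤ _ := by gcongr; exact lintegral_iUnion_le _ _
  have hzero : ∫⁻ ξ in {(0 : EuclideanSpace ℝ (Fin d))}, f ξ = 0 :=
    setLIntegral_measure_zero _ _ (measure_singleton 0)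
  -- bound each annulus integral
  set V : ℝ≥0∞ := volume (Metric.ball (0 : EuclideanSpace ℝ (Fin d)) 1) with hV
  have hVfin : V < ∞ := measure_ball_lt_top
  have hann : ∀ n, ∫⁻ ξ in A n, f ξ ≤
      ENNReal.ofReal (ρ n ^ d / ρ (n + 1) ^ α) * V := by
    intro n
    have hb : ∀ ξ ∈ A n, f ξ ≤ (ENNReal.ofReal (ρ (n+1) ^ α))⁻¹ := by
      intro ξ hξ
      have h1 : ρ (n+1) ≤ ‖ξ‖ := by
        have := hξ.2
        simpa [mem_ball_zero_iff, not_lt] using this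
      have h2 : ρ (n+1) ^ α ≤ ‖ξ‖ ^ α :=
        Real.rpow_le_rpow (hρ0 _).le h1 hα0
      exact ENNReal.inv_le_inv.2 (ENNReal.ofReal_le_ofReal h2)
    calc ∫⁻ ξ in A n, f ξ ≤ ∫⁻ _ in A n, (ENNReal.ofReal (ρ (n+1) ^ α))⁻¹ :=
          setLIntegral_mono measurable_const hb
      _ = (ENNReal.ofReal (ρ (n+1) ^ α))⁻¹ * volume (A n) := setLIntegral_const _ _
      _ ≤ (ENNReal.ofReal (ρ (n+1) ^ α))⁻¹ * volume (Metric.ball (0 : EuclideanSpace ℝ (Fin d)) (ρ n)) := by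
          gcongr
          exact Set.diff_subset
      _ = (ENNReal.ofReal (ρ (n+1) ^ α))⁻¹ * (ENNReal.ofReal (ρ n ^ d) * V) := by
          rw [Measure.addHaar_ball _ _ (hρ0 n).le, finrank_euclideanSpace_fin]
      _ = ENNReal.ofReal (ρ n ^ d / ρ (n + 1) ^ α) * V := by
          rw [ENNReal.ofReal_div_of_pos (Real.rpow_pos_of_pos (hρ0 _) α), div_eq_mul_inv]
          ring
  -- geometric series
  set x : ℝ := q ^ d / q ^ α with hx
  have hqα : (0:ℝ) < q ^ α := Real.rpow_pos_of_pos hq0 α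
  have hx0 : 0 ≤ x := by positivity
  have hx1 : x < 1 := by
    rw [hx, div_lt_one hqα, ← Real.rpow_natCast q d]
    exact Real.rpow_lt_rpow_of_exponent_gt hq0 hq1 hαd
  set K : ℝ := r ^ d / (r * q) ^ α with hK
  have hterm : ∀ n, ρ n ^ d / ρ (n + 1) ^ α = K * x ^ n := by
    intro n
    have h1 : ρ n ^ d = r ^ d * (q ^ d) ^ n := by
      show (r * q ^ n) ^ d = _
      rw [mul_pow, ← pow_mul, ← pow_mul, Nat.mul_comm]
    have h2 : ρ (n + 1) ^ α = (r * q) ^ α * (q ^ α) ^ n := by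
      show (r * q ^ (n + 1)) ^ α = _
      have hre : r * q ^ (n + 1) = (r * q) * q ^ n := by ring
      rw [hre, Real.mul_rpow (by positivity) (by positivity), aux_pow_rpow hq0.le]
    rw [h1, h2, hK, hx, div_pow]
    field_simp
  have hsum : ∑' n, ENNReal.ofReal (ρ n ^ d / ρ (n + 1) ^ α) < ∞ := by
    have heq : ∀ n, ENNReal.ofReal (ρ n ^ d / ρ (n + 1) ^ α)
        = ENNReal.ofReal K * (ENNReal.ofReal x) ^ n := by
      intro n
      rw [hterm n, ENNReal.ofReal_mul (by positivity), ENNReal.ofReal_pow hx0]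
    simp_rw [heq]
    rw [ENNReal.tsum_mul_left, ENNReal.tsum_geometric]
    refine ENNReal.mul_lt_top ENNReal.ofReal_lt_top ?_
    rw [ENNReal.inv_lt_top]
    rw [tsub_pos_iff_lt]
    exact ENNReal.ofReal_lt_one.2 hx1
  calc ∫⁻ ξ in Metric.ball (0 : EuclideanSpace ℝ (Fin d)) r, f ξ
      ≤ (∫⁻ ξ in {(0 : EuclideanSpace ℝ (Fin d))}, f ξ) + ∑' n, ∫⁻ ξ in A n, f ξ := key
    _ ≤ (∫⁻ ξ in {(0 : EuclideanSpace ℝ (Fin d))}, f ξ) + ∑' n, ENNReal.ofReal (ρ n ^ d / ρ (n + 1) ^ α) * V := by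
        gcongr with n; exact hann n
    _ = ∑' n, ENNReal.ofReal (ρ n ^ d / ρ (n + 1) ^ α) * V := by rw [hzero, zero_add]
    _ = (∑' n, ENNReal.ofReal (ρ n ^ d / ρ (n + 1) ^ α)) * V := ENNReal.tsum_mul_right
    _ < ∞ := ENNReal.mul_lt_top hsum hVfin

/-- in dimension `d ≥ 2`, if `I` is radial with profile concave near the
origin and its Pruitt index `δ` satisfies `δ < d`, then the Chung–Fuchs transience
condition holds for all sufficiently small radii. -/
theorem stmt8 (d : ℕ) (hd : 2 ≤ d)
    (I : EuclideanSpace ℝ (Fin d) → ℝ)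
    (hImeas : Measurable I)
    (g : ℝ → ℝ)
    (hgnonneg : ∀ t : ℝ, 0 ≤ t → 0 ≤ g t)
    (hrad : ∀ ξ, I ξ = g ‖ξ‖)
    (ε : ℝ) (hε : 0 < ε)
    (hconc : ConcaveOn ℝ (Set.Ico 0 ε) g)
    (δ : ℝ≥0∞)
    (hδ : δ = ⨆ (α : ℝ) (_ : 0 ≤ α)
      (_ : Tendsto (fun ξ => ENNReal.ofReal (I ξ) / ENNReal.ofReal (‖ξ‖ ^ α))
        (𝓝[≠] (0 : EuclideanSpace ℝ (Fin d))) (𝓝 0)), ENNReal.ofReal α)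
    (hδd : δ < (d : ℝ≥0∞)) :
    ∃ r₀ > (0 : ℝ), ∀ r : ℝ, 0 < r → r < r₀ →
      ∫⁻ ξ in Metric.ball (0 : EuclideanSpace ℝ (Fin d)) r,
        (ENNReal.ofReal (I ξ))⁻¹ < ∞ := by
  have hδtop : δ ≠ ⊤ := ne_top_of_lt hδd
  -- choose an exponent α with 1 ≤ α < d and δ < ofReal α
  obtain ⟨α, hα1, hαd, hδα⟩ : ∃ α : ℝ, 1 ≤ α ∧ α < d ∧ δ < ENNReal.ofReal α := by
    rcases lt_or_ge δ 1 with h | h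
    · refine ⟨1, le_refl _, ?_, by simpa using h⟩
      exact_mod_cast Nat.lt_of_lt_of_le Nat.one_lt_two hd
    · have hδr : δ.toReal < d := by
        have h2 : δ < ENNReal.ofReal d := by rwa [ENNReal.ofReal_natCast]
        exact (ENNReal.lt_ofReal_iff_toReal_lt hδtop).1 h2
      have h1δ : (1:ℝ) ≤ δ.toReal := by
        have := ENNReal.toReal_mono hδtop h
        simpa using this
      exact ⟨(δ.toReal + d) / 2, by linarith, by linarith,
        (ENNReal.lt_ofReal_iff_toReal_lt hδtop).2 (by linarith)⟩
  have hα0 : (0:ℝ) < α := lt_of_lt_of_le one_pos hα1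
  -- α is strictly above the Pruitt index, so the corresponding limit fails
  have hnot : ¬ Tendsto (fun ξ => ENNReal.ofReal (I ξ) / ENNReal.ofReal (‖ξ‖ ^ α))
      (𝓝[≠] (0 : EuclideanSpace ℝ (Fin d))) (𝓝 0) := by
    intro hT
    have hle : ENNReal.ofReal α ≤ δ := by
      rw [hδ]
      refine le_iSup_of_le α ?_
      rw [iSup_pos hα0.le, iSup_pos hT]
    exact absurd hδα (not_lt.2 hle)
  rw [ENNReal.tendsto_nhds_zero] at hnot
  push_neg at hnot
  obtain ⟨c, hc0, hcf⟩ := hnot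
  have hev : ∀ᶠ ξ in 𝓝[≠] (0 : EuclideanSpace ℝ (Fin d)), ‖ξ‖ < ε ∧ ξ ≠ 0 := by
    have h1 : ∀ᶠ ξ in 𝓝 (0 : EuclideanSpace ℝ (Fin d)), ‖ξ‖ < ε := by
      filter_upwards [Metric.ball_mem_nhds (0 : EuclideanSpace ℝ (Fin d)) hε] with ξ hξ
      exact mem_ball_zero_iff.1 hξ
    exact (eventually_nhdsWithin_of_eventually_nhds h1).and eventually_mem_nhdsWithin
  obtain ⟨ξ₀, hcξ, hξε, hξne⟩ := (hcf.and_eventually hev).exists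
  set t := ‖ξ₀‖ with htdef
  have ht0 : 0 < t := norm_pos_iff.2 hξne
  have htε : t < ε := hξε
  have hcξ' : c < ENNReal.ofReal (g t) / ENNReal.ofReal (t ^ α) := by
    have h := hcξ
    rwa [hrad ξ₀] at h
  have hcne : c ≠ ⊤ := by
    intro h; rw [h] at hcξ'; exact absurd hcξ' (not_lt.2 le_top)
  have htα : 0 < t ^ α := Real.rpow_pos_of_pos ht0 α
  set c₀ := c.toReal with hc₀def
  have hc₀pos : 0 < c₀ := ENNReal.toReal_pos (ne_of_gt hc0) hcne
  have hgt : c₀ * t ^ α ≤ g t := by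
    have hb0 : ENNReal.ofReal (t ^ α) ≠ 0 := by
      simp [ENNReal.ofReal_eq_zero, not_le, htα]
    have hmul : c * ENNReal.ofReal (t ^ α) < ENNReal.ofReal (g t) :=
      (ENNReal.lt_div_iff_mul_lt (Or.inl hb0) (Or.inl ENNReal.ofReal_ne_top)).1 hcξ'
    have hlt : ENNReal.ofReal (c₀ * t ^ α) < ENNReal.ofReal (g t) := by
      rwa [ENNReal.ofReal_mul hc₀pos.le, ENNReal.ofReal_toReal hcne]
    by_contra hcon
    push_neg at hcon
    exact absurd hlt (not_lt.2 (ENNReal.ofReal_le_ofReal hcon.le))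
  -- concavity gives a lower bound below t
  have hlow : ∀ s : ℝ, 0 < s → s ≤ t → c₀ * s ^ α ≤ g s := by
    intro s hs0 hst
    have hb : 0 ≤ s / t := by positivity
    have hb1 : s / t ≤ 1 := div_le_one_of_le₀ hst ht0.le
    have hcc := hconc.2 (Set.mem_Ico.2 ⟨le_refl (0:ℝ), hε⟩) (Set.mem_Ico.2 ⟨ht0.le, htε⟩)
        (by linarith : (0:ℝ) ≤ 1 - s / t) hb (by ring)
    have harg : (1 - s / t) • (0:ℝ) + (s / t) • t = s := by
      rw [smul_eq_mul, smul_eq_mul, mul_zero, zero_add, div_mul_cancel₀ s ht0.ne']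
    rw [harg] at hcc
    have hg0 : 0 ≤ g 0 := hgnonneg 0 le_rfl
    have h1 : (s / t) * g t ≤ g s := by
      simp only [smul_eq_mul] at hcc
      nlinarith
    have hts : s ^ (α - 1) ≤ t ^ (α - 1) :=
      Real.rpow_le_rpow hs0.le hst (by linarith)
    have hsplit : ∀ u : ℝ, 0 < u → u ^ α = u * u ^ (α - 1) := by
      intro u hu
      have h' : (1:ℝ) + (α - 1) = α := by ring
      have h2 := Real.rpow_add hu 1 (α - 1)
      rw [Real.rpow_one, h'] at h2
      exact h2
    have h2 : c₀ * s ^ α ≤ (s / t) * (c₀ * t ^ α) := by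
      rw [hsplit s hs0]
      have hr : (s / t) * (c₀ * t ^ α) = c₀ * (s * t ^ (α - 1)) := by
        rw [hsplit t ht0]; field_simp
      rw [hr]
      have : s * s ^ (α - 1) ≤ s * t ^ (α - 1) := by
        exact mul_le_mul_of_nonneg_left hts hs0.le
      nlinarith
    calc c₀ * s ^ α ≤ (s / t) * (c₀ * t ^ α) := h2
      _ ≤ (s / t) * g t := mul_le_mul_of_nonneg_left hgt hb
      _ ≤ g s := h1
  -- conclusion
  refine ⟨t, ht0, fun r hr0 hrt => ?_⟩
  have hc₀ne : ENNReal.ofReal c₀ ≠ 0 := (ENNReal.ofReal_pos.2 hc₀pos).ne'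
  have hbound : ∀ ξ ∈ Metric.ball (0 : EuclideanSpace ℝ (Fin d)) r,
      (ENNReal.ofReal (I ξ))⁻¹ ≤ (ENNReal.ofReal c₀)⁻¹ * (ENNReal.ofReal (‖ξ‖ ^ α))⁻¹ := by
    intro ξ hξ
    rcases eq_or_ne ξ 0 with rfl | hne
    · have hz : ‖(0 : EuclideanSpace ℝ (Fin d))‖ ^ α = 0 := by
        rw [norm_zero, Real.zero_rpow hα0.ne']
      rw [hz, ENNReal.ofReal_zero, ENNReal.inv_zero, ENNReal.mul_top]
      · exact le_top
      · simp [ENNReal.inv_ne_zero, ENNReal.ofReal_ne_top]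
    · have hs0 : 0 < ‖ξ‖ := norm_pos_iff.2 hne
      have hsr : ‖ξ‖ < r := mem_ball_zero_iff.1 hξ
      have h := hlow ‖ξ‖ hs0 (le_trans hsr.le hrt.le)
      calc (ENNReal.ofReal (I ξ))⁻¹ = (ENNReal.ofReal (g ‖ξ‖))⁻¹ := by rw [hrad]
        _ ≤ (ENNReal.ofReal (c₀ * ‖ξ‖ ^ α))⁻¹ :=
            ENNReal.inv_le_inv' (ENNReal.ofReal_le_ofReal h)
        _ = (ENNReal.ofReal c₀)⁻¹ * (ENNReal.ofReal (‖ξ‖ ^ α))⁻¹ := by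
            rw [ENNReal.ofReal_mul hc₀pos.le,
              ENNReal.mul_inv (Or.inl hc₀ne) (Or.inl ENNReal.ofReal_ne_top)]
  have hmeas : Measurable fun ξ : EuclideanSpace ℝ (Fin d) =>
      (ENNReal.ofReal c₀)⁻¹ * (ENNReal.ofReal (‖ξ‖ ^ α))⁻¹ := by
    refine measurable_const.mul ?_
    exact ((continuous_norm.rpow_const fun x => Or.inr hα0.le).measurable.ennreal_ofReal).inv
  calc ∫⁻ ξ in Metric.ball (0 : EuclideanSpace ℝ (Fin d)) r, (ENNReal.ofReal (I ξ))⁻¹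
      ≤ ∫⁻ ξ in Metric.ball (0 : EuclideanSpace ℝ (Fin d)) r,
          (ENNReal.ofReal c₀)⁻¹ * (ENNReal.ofReal (‖ξ‖ ^ α))⁻¹ :=
        setLIntegral_mono hmeas hbound
    _ = (ENNReal.ofReal c₀)⁻¹ *
          ∫⁻ ξ in Metric.ball (0 : EuclideanSpace ℝ (Fin d)) r,
            (ENNReal.ofReal (‖ξ‖ ^ α))⁻¹ :=
        lintegral_const_mul' _ _ (by simpa [ENNReal.inv_ne_top] using hc₀ne)
    _ < ∞ := ENNReal.mul_lt_top (by simpa [ENNReal.inv_lt_top, pos_iff_ne_zero] using hc₀ne)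
        (aux_fin_int d (by omega) α hα0.le hαd r hr0)
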